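/- arXiv:2601.13410 — 3 statements merged into one kernel-verified Lean document; each statement's English description precedes it below -/
import Mathlib

section
/- Let Ω be a bounded polytope in R^d defined by hyperplanes (w_i, c_i), i ∈ [m], let p ∈ int(Ω), and r ≥ 0. The forward Funk ball B_F(p,r) = { q ∈ Ω : d_F(p,q) ≤ r } equals the intersection over i ∈ [m] of the half-spaces { q : w_i^T q + c_i − e^{−r}(w_i^T p + c_i) ≥ 0 }. In particular, B_F(p,r) is a convex polytope bounded by at most m hyperplanes, each parallel to a facet hyperplane of Ω. -/
open Matrix

/-- Funk balls are polytopes: for a bounded polytope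
`Ω = ⋂ᵢ {x : wᵢ ⬝ x + cᵢ ≥ 0}`, `p ∈ int Ω` and `r ≥ 0`, the Funk ball
`B_F(p,r) = { q : d_F(p,q) ≤ r }` (with `d_F` by Birkhoff's formula, and boundary points of
`Ω` at infinite Funk distance) equals the intersection of the `m` half-spaces
`{ q : wᵢ ⬝ q + cᵢ − e^{−r}(wᵢ ⬝ p + cᵢ) ≥ 0 }`, each parallel to a facet hyperplane of `Ω`. -/
theorem funk_ball_polytope {d m : ℕ} (hm : 0 < m)
    (w : Fin m → Fin d → ℝ) (c : Fin m → ℝ)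
    (Ω : Set (Fin d → ℝ)) (hΩ : Ω = {x | ∀ i, 0 ≤ w i ⬝ᵥ x + c i})
    (hbdd : Bornology.IsBounded Ω)
    (hint : interior Ω = {x | ∀ i, 0 < w i ⬝ᵥ x + c i})
    (p : Fin d → ℝ) (hp : p ∈ interior Ω) (r : ℝ) (hr : 0 ≤ r) :
    {q ∈ interior Ω |
        Finset.univ.sup' (Finset.univ_nonempty_iff.mpr ⟨⟨0, hm⟩⟩)
          (fun i => Real.log ((w i ⬝ᵥ p + c i) / (w i ⬝ᵥ q + c i))) ≤ r} =
      ⋂ i : Fin m, {q | 0 ≤ w i ⬝ᵥ q + c i - Real.exp (-r) * (w i ⬝ᵥ p + c i)} := by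
  rw [hint] at hp ⊢
  ext q
  simp only [Set.mem_setOf_eq, Set.mem_sep_iff, Set.mem_iInter,
    Finset.sup'_le_iff, Finset.mem_univ, forall_true_iff, sub_nonneg]
  constructor
  · rintro ⟨hq, hsup⟩ i
    have hqi := hq i
    have hpi := hp i
    have hlog := hsup i
    have : (w i ⬝ᵥ p + c i) / (w i ⬝ᵥ q + c i) ≤ Real.exp r := by
      calc (w i ⬝ᵥ p + c i) / (w i ⬝ᵥ q + c i)
          = Real.exp (Real.log ((w i ⬝ᵥ p + c i) / (w i ⬝ᵥ q + c i))) := by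
            rw [Real.exp_log (div_pos hpi hqi)]
        _ ≤ Real.exp r := Real.exp_le_exp.mpr (hlog trivial)
    have h2 : w i ⬝ᵥ p + c i ≤ Real.exp r * (w i ⬝ᵥ q + c i) :=
      (div_le_iff₀ hqi).mp this
    rw [Real.exp_neg]
    rw [inv_mul_le_iff₀ (Real.exp_pos r)]
    linarith [mul_comm (Real.exp r) (w i ⬝ᵥ q + c i)]
  · intro h
    have hq : ∀ i, 0 < w i ⬝ᵥ q + c i := fun i =>
      lt_of_lt_of_le (mul_pos (Real.exp_pos (-r)) (hp i)) (h i)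
    refine ⟨hq, fun i _ => ?_⟩
    have hi := h i
    have hpi := hp i
    have hqi := hq i
    have hr1 : (w i ⬝ᵥ p + c i) / (w i ⬝ᵥ q + c i) ≤ Real.exp r := by
      rw [div_le_iff₀ hqi]
      rw [Real.exp_neg] at hi
      rw [inv_mul_le_iff₀ (Real.exp_pos r)] at hi
      linarith [mul_comm (Real.exp r) (w i ⬝ᵥ q + c i)]
    calc Real.log ((w i ⬝ᵥ p + c i) / (w i ⬝ᵥ q + c i))
        ≤ Real.log (Real.exp r) := Real.log_le_log (div_pos hpi hqi) hr1
      _ = r := Real.log_exp r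
end

section
/- Let Ω be a bounded polytope in R^d defined by hyperplanes (w_i, c_i), i ∈ [m], let p ∈ int(Ω) and r ≥ 0. The Hilbert ball B_H(p,r) = { q ∈ Ω : d_H(p,q) ≤ r } equals the intersection over ordered pairs (j,k) ∈ [m]×[m] of the half-spaces { q : (α_{j,k} w_j − α'_{j,k} w_k)^T q + (α_{j,k} c_j − α'_{j,k} c_k) ≥ 0 }, where α_{j,k} = e^{2r}(w_k^T p + c_k) and α'_{j,k} = w_j^T p + c_j. In particular, B_H(p,r) is a convex polytope bounded by at most m(m−1) hyperplanes. -/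
open Matrix

/-- Hilbert balls are polytopes: for a bounded polytope
`Ω = ⋂ᵢ {x : wᵢ ⬝ x + cᵢ ≥ 0}`, `p ∈ int Ω`, `r ≥ 0`, the Hilbert ball
`B_H(p,r) = { q : d_H(p,q) ≤ r }` (with `d_H` via Birkhoff's formulation) equals the
intersection over ordered pairs `(j,k)` of the half-spaces
`{ q ∈ Ω : (α_{j,k} w_j − α'_{j,k} w_k) ⬝ q + (α_{j,k} c_j − α'_{j,k} c_k) ≥ 0 }`, where
`α_{j,k} = e^{2r}(w_k ⬝ p + c_k)` and `α'_{j,k} = w_j ⬝ p + c_j`; in particular it is a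
convex polytope bounded by at most `m(m−1)` hyperplanes. -/
theorem hilbert_ball_polytope {d m : ℕ} (hm : 0 < m)
    (w : Fin m → Fin d → ℝ) (c : Fin m → ℝ)
    (Ω : Set (Fin d → ℝ)) (hΩ : Ω = {x | ∀ i, 0 ≤ w i ⬝ᵥ x + c i})
    (hbdd : Bornology.IsBounded Ω)
    (hint : interior Ω = {x | ∀ i, 0 < w i ⬝ᵥ x + c i})
    (hnondeg : ∀ x ∈ Ω, ∃ i, 0 < w i ⬝ᵥ x + c i)
    (p : Fin d → ℝ) (hp : p ∈ interior Ω) (r : ℝ) (hr : 0 ≤ r) :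
    {q ∈ interior Ω |
        (1 / 2) * Finset.univ.sup' (Finset.univ_nonempty_iff.mpr ⟨(⟨0, hm⟩, ⟨0, hm⟩)⟩)
          (fun jk : Fin m × Fin m =>
            Real.log (((w jk.1 ⬝ᵥ p + c jk.1) / (w jk.1 ⬝ᵥ q + c jk.1)) *
              ((w jk.2 ⬝ᵥ q + c jk.2) / (w jk.2 ⬝ᵥ p + c jk.2)))) ≤ r} =
      ⋂ j : Fin m, ⋂ k : Fin m,
        {q ∈ Ω | 0 ≤
          (fun t => (Real.exp (2 * r) * (w k ⬝ᵥ p + c k)) * w j t -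
              (w j ⬝ᵥ p + c j) * w k t) ⬝ᵥ q +
            ((Real.exp (2 * r) * (w k ⬝ᵥ p + c k)) * c j - (w j ⬝ᵥ p + c j) * c k)} := by
  have hppos : ∀ i, 0 < w i ⬝ᵥ p + c i := by rw [hint] at hp; exact hp
  have hexp : (0:ℝ) < Real.exp (2*r) := Real.exp_pos _
  have hdot : ∀ (a b : ℝ) (j k : Fin m) (q : Fin d → ℝ),
      (fun t => a * w j t - b * w k t) ⬝ᵥ q = a * (w j ⬝ᵥ q) - b * (w k ⬝ᵥ q) := by
    intro a b j k q
    simp [dotProduct, sub_mul, mul_assoc, Finset.sum_sub_distrib, Finset.mul_sum]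
  ext q
  simp only [Set.mem_setOf_eq, Set.mem_iInter, Set.mem_sep_iff]
  constructor
  · rintro ⟨hq, hsup⟩
    have hqpos : ∀ i, 0 < w i ⬝ᵥ q + c i := by rw [hint] at hq; exact hq
    have hqΩ : q ∈ Ω := by rw [hΩ]; intro i; exact (hqpos i).le
    intro j k
    refine ⟨hqΩ, ?_⟩
    have hterm : Real.log (((w j ⬝ᵥ p + c j) / (w j ⬝ᵥ q + c j)) *
        ((w k ⬝ᵥ q + c k) / (w k ⬝ᵥ p + c k))) ≤ 2*r := by
      have hle := Finset.le_sup' (f := fun jk : Fin m × Fin m =>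
        Real.log (((w jk.1 ⬝ᵥ p + c jk.1) / (w jk.1 ⬝ᵥ q + c jk.1)) *
          ((w jk.2 ⬝ᵥ q + c jk.2) / (w jk.2 ⬝ᵥ p + c jk.2))))
        (Finset.mem_univ (j, k))
      simp only at hle
      linarith
    have hx : ((w j ⬝ᵥ p + c j) / (w j ⬝ᵥ q + c j)) *
        ((w k ⬝ᵥ q + c k) / (w k ⬝ᵥ p + c k)) ≤ Real.exp (2*r) := by
      have hpos : 0 < ((w j ⬝ᵥ p + c j) / (w j ⬝ᵥ q + c j)) *
          ((w k ⬝ᵥ q + c k) / (w k ⬝ᵥ p + c k)) := by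
        have := hppos j; have := hppos k; have := hqpos j; have := hqpos k
        positivity
      exact (Real.log_le_iff_le_exp hpos).mp hterm
    have hx' : (w j ⬝ᵥ p + c j) * (w k ⬝ᵥ q + c k) ≤
        Real.exp (2*r) * ((w j ⬝ᵥ q + c j) * (w k ⬝ᵥ p + c k)) := by
      rw [div_mul_div_comm] at hx
      have hpos : 0 < (w j ⬝ᵥ q + c j) * (w k ⬝ᵥ p + c k) :=
        mul_pos (hqpos j) (hppos k)
      exact (div_le_iff₀ hpos).mp hx
    rw [hdot]
    nlinarith [hx']
  · intro h
    obtain ⟨k0, hk0⟩ := hnondeg q (h ⟨0, hm⟩ ⟨0, hm⟩).1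
    have hqΩ := (h ⟨0, hm⟩ ⟨0, hm⟩).1
    have hineq : ∀ j k : Fin m, (w j ⬝ᵥ p + c j) * (w k ⬝ᵥ q + c k) ≤
        Real.exp (2*r) * ((w k ⬝ᵥ p + c k) * (w j ⬝ᵥ q + c j)) := by
      intro j k
      have := (h j k).2
      rw [hdot] at this
      nlinarith [this]
    have hqpos : ∀ i, 0 < w i ⬝ᵥ q + c i := by
      intro j
      nlinarith [hineq j k0, mul_pos hexp (hppos k0), mul_pos (hppos j) hk0]
    have hqint : q ∈ interior Ω := by rw [hint]; exact hqpos
    refine ⟨hqint, ?_⟩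
    have hsup : Finset.univ.sup' (Finset.univ_nonempty_iff.mpr ⟨(⟨0, hm⟩, ⟨0, hm⟩)⟩)
        (fun jk : Fin m × Fin m =>
          Real.log (((w jk.1 ⬝ᵥ p + c jk.1) / (w jk.1 ⬝ᵥ q + c jk.1)) *
            ((w jk.2 ⬝ᵥ q + c jk.2) / (w jk.2 ⬝ᵥ p + c jk.2)))) ≤ 2*r := by
      apply Finset.sup'_le
      intro jk _
      obtain ⟨j, k⟩ := jk
      simp only
      have hx : ((w j ⬝ᵥ p + c j) / (w j ⬝ᵥ q + c j)) *
          ((w k ⬝ᵥ q + c k) / (w k ⬝ᵥ p + c k)) ≤ Real.exp (2*r) := by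
        rw [div_mul_div_comm]
        rw [div_le_iff₀ (mul_pos (hqpos j) (hppos k))]
        nlinarith [hineq j k]
      calc Real.log (((w j ⬝ᵥ p + c j) / (w j ⬝ᵥ q + c j)) *
          ((w k ⬝ᵥ q + c k) / (w k ⬝ᵥ p + c k)))
          ≤ Real.log (Real.exp (2*r)) := by
            apply Real.log_le_log _ hx
            have := hppos j; have := hppos k; have := hqpos j; have := hqpos k
            positivity
        _ = 2*r := Real.log_exp _
    linarith
end

section
/- Funk balls are scaled copies of Ω: for a bounded polytope Ω, p ∈ int(Ω), and r ≥ 0, the Funk ball B_F(p,r) equals the image of Ω under the homothety centered at p with ratio (1 − e^{−r}), i.e., B_F(p,r) = { p + (1 − e^{−r})(x − p) : x ∈ Ω }. -/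
open Matrix

/-- Funk balls are scaled copies of `Ω`: for a bounded polytope
`Ω = ⋂ᵢ {x : wᵢ ⬝ x + cᵢ ≥ 0}`, `p ∈ int Ω` and `r ≥ 0`, the Funk ball
`B_F(p,r) = { q : maxᵢ log((wᵢ⬝p+cᵢ)/(wᵢ⬝q+cᵢ)) ≤ r }` equals the image of `Ω` under the
homothety centered at `p` with ratio `1 − e^{−r}`. -/
theorem funk_ball_homothety {d m : ℕ} (hm : 0 < m)
    (w : Fin m → Fin d → ℝ) (c : Fin m → ℝ)
    (Ω : Set (Fin d → ℝ)) (hΩ : Ω = {x | ∀ i, 0 ≤ w i ⬝ᵥ x + c i})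
    (hbdd : Bornology.IsBounded Ω)
    (hint : interior Ω = {x | ∀ i, 0 < w i ⬝ᵥ x + c i})
    (p : Fin d → ℝ) (hp : p ∈ interior Ω) (r : ℝ) (hr : 0 ≤ r) :
    {q ∈ interior Ω |
        Finset.univ.sup' (Finset.univ_nonempty_iff.mpr ⟨⟨0, hm⟩⟩)
          (fun i => Real.log ((w i ⬝ᵥ p + c i) / (w i ⬝ᵥ q + c i))) ≤ r} =
      (fun x => p + (1 - Real.exp (-r)) • (x - p)) '' Ω := by
  set t := 1 - Real.exp (-r) with htdef
  have hexp : Real.exp (-r) = 1 - t := by ring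
  have hexpos : 0 < Real.exp (-r) := Real.exp_pos _
  have ht0 : 0 ≤ t := by
    have : Real.exp (-r) ≤ 1 := Real.exp_le_one_iff.mpr (by linarith)
    linarith
  have hai : ∀ i, 0 < w i ⬝ᵥ p + c i := by
    have := hp; rw [hint] at this; exact this
  have key : ∀ i (s : ℝ) (u v : Fin d → ℝ),
      w i ⬝ᵥ (u + s • v) = w i ⬝ᵥ u + s * (w i ⬝ᵥ v) := by
    intro i s u v
    simp [dotProduct_add, dotProduct_smul, smul_eq_mul]
  ext q
  simp only [Set.mem_setOf_eq, Set.mem_image, Set.mem_sep_iff]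
  constructor
  · rintro ⟨hq, hsup⟩
    have hbi : ∀ i, 0 < w i ⬝ᵥ q + c i := by
      have := hq; rw [hint] at this; exact this
    have hratio : ∀ i, Real.exp (-r) * (w i ⬝ᵥ p + c i) ≤ w i ⬝ᵥ q + c i := by
      intro i
      have hle : Real.log ((w i ⬝ᵥ p + c i) / (w i ⬝ᵥ q + c i)) ≤ r :=
        le_trans (Finset.le_sup'
          (fun i => Real.log ((w i ⬝ᵥ p + c i) / (w i ⬝ᵥ q + c i)))
          (Finset.mem_univ i)) hsup
      have hpos : 0 < (w i ⬝ᵥ p + c i) / (w i ⬝ᵥ q + c i) :=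
        div_pos (hai i) (hbi i)
      have := (Real.log_le_iff_le_exp hpos).mp hle
      rw [div_le_iff₀ (hbi i)] at this
      calc Real.exp (-r) * (w i ⬝ᵥ p + c i)
          ≤ Real.exp (-r) * (Real.exp r * (w i ⬝ᵥ q + c i)) := by
            exact mul_le_mul_of_nonneg_left this hexpos.le
        _ = w i ⬝ᵥ q + c i := by
            rw [← mul_assoc, ← Real.exp_add]; simp
    rcases eq_or_lt_of_le ht0 with htz | htp
    · -- t = 0 case: q = p
      have hqp : q = p := by
        by_contra hne
        have hv : ∀ i, 0 ≤ w i ⬝ᵥ (q - p) := by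
          intro i
          have := hratio i
          rw [← htz] at hexp
          rw [hexp] at this
          have : w i ⬝ᵥ p ≤ w i ⬝ᵥ q := by linarith
          rw [dotProduct_sub]; linarith
        obtain ⟨C, hC⟩ := hbdd.exists_norm_le
        have hCp : ‖p‖ ≤ C := hC p (interior_subset hp)
        set v := q - p with hvdef
        have hvne : v ≠ 0 := sub_ne_zero.mpr hne
        have hvnorm : 0 < ‖v‖ := norm_pos_iff.mpr hvne
        set s : ℝ := (C + ‖p‖ + 1) / ‖v‖ with hsdef
        have hs0 : 0 ≤ s :=
          div_nonneg (by linarith [norm_nonneg p]) hvnorm.le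
        have hmem : p + s • v ∈ Ω := by
          rw [hΩ]
          intro i
          rw [key]
          have := hai i
          have := mul_nonneg hs0 (hv i)
          linarith
        have hCm := hC _ hmem
        have h1 : ‖s • v‖ ≤ ‖p + s • v‖ + ‖p‖ := by
          calc ‖s • v‖ = ‖(p + s • v) - p‖ := by congr 1; abel
            _ ≤ ‖p + s • v‖ + ‖p‖ := norm_sub_le _ _
        rw [norm_smul, Real.norm_eq_abs, abs_of_nonneg hs0] at h1
        have hsv : s * ‖v‖ = C + ‖p‖ + 1 := by
          rw [hsdef, div_mul_cancel₀ _ hvnorm.ne']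
        linarith
      refine ⟨p, interior_subset hp, ?_⟩
      rw [sub_self, smul_zero, add_zero, hqp]
    · -- t > 0 case
      refine ⟨p + t⁻¹ • (q - p), ?_, ?_⟩
      · rw [hΩ]
        intro i
        rw [key]
        have hb := hratio i
        rw [hexp] at hb
        have hd : w i ⬝ᵥ (q - p) = (w i ⬝ᵥ q + c i) - (w i ⬝ᵥ p + c i) := by
          rw [dotProduct_sub]; ring
        rw [hd]
        have : -(t * (w i ⬝ᵥ p + c i)) ≤ (w i ⬝ᵥ q + c i) - (w i ⬝ᵥ p + c i) := by
          linarith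
        have h2 : t⁻¹ * (-(t * (w i ⬝ᵥ p + c i))) ≤
            t⁻¹ * ((w i ⬝ᵥ q + c i) - (w i ⬝ᵥ p + c i)) :=
          mul_le_mul_of_nonneg_left this (inv_nonneg.mpr ht0)
        have h3 : t⁻¹ * (-(t * (w i ⬝ᵥ p + c i))) = -(w i ⬝ᵥ p + c i) := by
          rw [mul_neg, ← mul_assoc, inv_mul_cancel₀ htp.ne', one_mul]
        linarith
      · show p + t • (p + t⁻¹ • (q - p) - p) = q
        rw [add_sub_cancel_left, smul_smul, mul_inv_cancel₀ htp.ne', one_smul]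
        abel
  · rintro ⟨x, hx, rfl⟩
    rw [hΩ] at hx
    have hbq : ∀ i, Real.exp (-r) * (w i ⬝ᵥ p + c i) ≤
        w i ⬝ᵥ (p + t • (x - p)) + c i := by
      intro i
      rw [key, hexp]
      have hd : w i ⬝ᵥ (x - p) = (w i ⬝ᵥ x + c i) - (w i ⬝ᵥ p + c i) := by
        rw [dotProduct_sub]; ring
      rw [hd]
      have h1 := mul_nonneg ht0 (hx i)
      nlinarith [hai i, hx i]
    have hbpos : ∀ i, 0 < w i ⬝ᵥ (p + t • (x - p)) + c i := by
      intro i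
      exact lt_of_lt_of_le (mul_pos hexpos (hai i)) (hbq i)
    refine ⟨?_, ?_⟩
    · rw [hint]; exact hbpos
    · apply Finset.sup'_le
      intro i _
      have hpos : 0 < (w i ⬝ᵥ p + c i) / (w i ⬝ᵥ (p + t • (x - p)) + c i) :=
        div_pos (hai i) (hbpos i)
      rw [Real.log_le_iff_le_exp hpos, div_le_iff₀ (hbpos i)]
      have := mul_le_mul_of_nonneg_left (hbq i) (Real.exp_pos r).le
      calc w i ⬝ᵥ p + c i
          = Real.exp r * (Real.exp (-r) * (w i ⬝ᵥ p + c i)) := by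
            rw [← mul_assoc, ← Real.exp_add]; simp
        _ ≤ Real.exp r * (w i ⬝ᵥ (p + t • (x - p)) + c i) := this
end
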